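/- Let q: 𝔽_p^n → 𝔽_p be given by q(x) = xᵀMx + bᵀx where M is a symmetric matrix of rank r over 𝔽_p (p odd) and b ∈ 𝔽_p^n. Then |𝔼_{x ∈ 𝔽_p^n} ω^{q(x)}| ≤ p^{-r/2}, with equality when b = 0. -/

import Mathlib

open Complex Finset AddChar

lemma addChar_map_sum {A M ι : Type*} [AddCommMonoid A] [CommMonoid M]
    (ψ : AddChar A M) (s : Finset ι) (f : ι → A) :
    ψ (∑ i ∈ s, f i) = ∏ i ∈ s, ψ (f i) := by
  classical
  induction s using Finset.cons_induction with
  | empty => simp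
  | cons a s ha ih => rw [Finset.sum_cons, Finset.prod_cons, AddChar.map_add_eq_mul, ih]

lemma sum_pi_char {p n : ℕ} [Fact p.Prime] {R' : Type*} [CommRing R'] [IsDomain R']
    (ψ : AddChar (ZMod p) R') (hψ : ψ.IsPrimitive) (c : Fin n → ZMod p) :
    ∑ x : Fin n → ZMod p, ψ (∑ i, c i * x i) =
      if c = 0 then (p : R') ^ n else 0 := by
  classical
  have h1 : ∀ x : Fin n → ZMod p, ψ (∑ i, c i * x i) = ∏ i, ψ (c i * x i) := fun x =>
    addChar_map_sum ψ _ _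
  simp only [h1]
  have h2 : ∑ x : Fin n → ZMod p, ∏ i, ψ (c i * x i)
      = ∏ i, ∑ t : ZMod p, ψ (c i * t) := by
    rw [Finset.prod_univ_sum]
    rw [Fintype.piFinset_univ]
  rw [h2]
  have h3 : ∀ i, ∑ t : ZMod p, ψ (c i * t)
      = if c i = 0 then (p : R') else 0 := by
    intro i
    have := AddChar.sum_mulShift (c i) hψ
    rw [ZMod.card] at this
    rw [Fintype.sum_congr _ _ (fun t => by rw [mul_comm] : ∀ t, ψ (c i * t) = ψ (t * c i)), this]
    split <;> simp
  simp only [h3]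
  by_cases hc : c = 0
  · simp [hc]
  · obtain ⟨i, hi⟩ : ∃ i, c i ≠ 0 := by
      by_contra h
      push_neg at h
      exact hc (funext h)
    rw [if_neg hc]
    exact Finset.prod_eq_zero (Finset.mem_univ i) (if_neg hi)

/-- Gauss sum for a quadratic `q(x) = xᵀMx + bᵀx` with `M` symmetric of rank `r`:
`|𝔼_x ω^{q(x)}| ≤ p^{-r/2}`, with equality when `b = 0`. -/
theorem gauss_sum_rank (p : ℕ) [Fact p.Prime] (hp : Odd p) (n r : ℕ)
    (M : Matrix (Fin n) (Fin n) (ZMod p)) (hM : M.IsSymm) (hr : M.rank = r)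
    (b : Fin n → ZMod p) :
    ‖(∑ x : Fin n → ZMod p,
        Complex.exp (2 * Real.pi * I / p) ^
          ((∑ i, ∑ j, x i * M i j * x j) + ∑ i, b i * x i).val) /
      ((p : ℂ) ^ n)‖ ≤ (p : ℝ) ^ (-(r : ℝ) / 2) ∧
    (b = 0 →
      ‖(∑ x : Fin n → ZMod p,
          Complex.exp (2 * Real.pi * I / p) ^
            ((∑ i, ∑ j, x i * M i j * x j) + ∑ i, b i * x i).val) /
        ((p : ℂ) ^ n)‖ = (p : ℝ) ^ (-(r : ℝ) / 2)) := by
  classical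
  have hpprime : p.Prime := Fact.out
  have hp0 : p ≠ 0 := hpprime.ne_zero
  have hppos : (0:ℝ) < p := by exact_mod_cast hpprime.pos
  set ω : ℂ := Complex.exp (2 * Real.pi * I / p) with hω
  have hprim : IsPrimitiveRoot ω p := Complex.isPrimitiveRoot_exp p hp0
  have hωp : ω ^ p = 1 := hprim.pow_eq_one
  set ψ : AddChar (ZMod p) ℂ := AddChar.zmodChar p hωp with hψdef
  have hψprim : ψ.IsPrimitive := AddChar.zmodChar_primitive_of_primitive_root p hprim
  have hnorm : ∀ a : ZMod p, ‖ψ a‖ = 1 := fun a => by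
    show ‖ω ^ a.val‖ = 1
    rw [norm_pow, Complex.norm_eq_one_of_pow_eq_one hωp hp0, one_pow]
  have hconj : ∀ a : ZMod p, (starRingEnd ℂ) (ψ a) = ψ (-a) := by
    intro a
    have hchar : 0 < ringChar (ZMod p) := by
      rw [ZMod.ringChar_zmod_n]; exact hpprime.pos
    rw [AddChar.starComp_apply hchar, AddChar.inv_apply]
  have hsym : ∀ i j, M j i = M i j := fun i j => hM.apply i j
  have two_ne : (2 : ZMod p) ≠ 0 := by
    intro h
    have h2 : ((2:ℕ) : ZMod p) = 0 := by exact_mod_cast h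
    rw [ZMod.natCast_eq_zero_iff] at h2
    rw [(Nat.prime_dvd_prime_iff_eq hpprime Nat.prime_two).mp h2] at hp
    simp [Nat.odd_iff] at hp
  set Q : (Fin n → ZMod p) → ZMod p :=
    fun x => (∑ i, ∑ j, x i * M i j * x j) + ∑ i, b i * x i with hQ
  set A : (Fin n → ZMod p) → Fin n → ZMod p :=
    fun h j => 2 * ∑ i, h i * M i j with hA
  set S : ℂ := ∑ x : Fin n → ZMod p, ψ (Q x) with hS
  set K : Finset (Fin n → ZMod p) :=
    univ.filter fun h => M.mulVec h = 0 with hK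
  set T : ℂ := ∑ h ∈ K, ψ (∑ i, b i * h i) with hT
  -- key algebraic identity
  have cross : ∀ h y : Fin n → ZMod p,
      (∑ i, ∑ j, y i * M i j * h j) = ∑ i, ∑ j, h i * M i j * y j := by
    intro h y
    rw [Finset.sum_comm]
    exact Finset.sum_congr rfl fun a _ => Finset.sum_congr rfl fun c _ => by
      rw [hsym a c]; ring
  have key : ∀ h y : Fin n → ZMod p, Q (h + y) - Q y = Q h + ∑ j, A h j * y j := by
    intro h y
    have sumA : (∑ j, A h j * y j)
        = (∑ i, ∑ j, h i * M i j * y j) + (∑ i, ∑ j, y i * M i j * h j) := by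
      rw [cross h y, ← Finset.sum_add_distrib]
      calc ∑ j, A h j * y j
          = ∑ j, ∑ i, (h i * M i j * y j + h i * M i j * y j) := by
            refine Finset.sum_congr rfl fun j _ => ?_
            simp only [hA]
            rw [two_mul, add_mul, Finset.sum_mul, ← Finset.sum_add_distrib]
        _ = ∑ i, ∑ j, (h i * M i j * y j + h i * M i j * y j) := Finset.sum_comm
        _ = ∑ i, (∑ j, h i * M i j * y j + ∑ j, h i * M i j * y j) :=
            Finset.sum_congr rfl fun i _ => Finset.sum_add_distrib
    have e1 : Q (h + y) = Q h + Q y + ∑ j, A h j * y j := by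
      rw [sumA]
      simp only [hQ, Pi.add_apply]
      calc (∑ i, ∑ j, (h i + y i) * M i j * (h j + y j)) + ∑ i, b i * (h i + y i)
          = (∑ i, ∑ j, (h i * M i j * h j + h i * M i j * y j
              + (y i * M i j * h j + y i * M i j * y j)))
            + ∑ i, (b i * h i + b i * y i) := by
            congr 1
            · exact Finset.sum_congr rfl fun i _ =>
                Finset.sum_congr rfl fun j _ => by ring
            · exact Finset.sum_congr rfl fun i _ => by ring
        _ = _ := by
            simp only [Finset.sum_add_distrib]
            ring
    rw [e1]; ring
  -- kernel description
  have hmv : ∀ (h : Fin n → ZMod p) (j : Fin n),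
      M.mulVec h j = ∑ i, h i * M i j := by
    intro h j
    simp only [Matrix.mulVec, dotProduct]
    exact Finset.sum_congr rfl fun i _ => by rw [hsym i j, mul_comm]
  have hAiff : ∀ h : Fin n → ZMod p, A h = 0 ↔ M.mulVec h = 0 := by
    intro h
    rw [funext_iff, funext_iff]
    apply forall_congr'
    intro j
    simp only [hA, Pi.zero_apply, hmv h j, mul_eq_zero, two_ne, false_or]
  have hQK : ∀ h : Fin n → ZMod p, M.mulVec h = 0 → Q h = ∑ i, b i * h i := by
    intro h hh
    have hz : ∀ j, (∑ i, h i * M i j) = 0 := fun j => by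
      rw [← hmv h j, hh]; rfl
    have : (∑ i, ∑ j, h i * M i j * h j) = 0 := by
      rw [Finset.sum_comm]
      refine Finset.sum_eq_zero fun j _ => ?_
      rw [← Finset.sum_mul, hz j, zero_mul]
    simp only [hQ, this, zero_add]
  -- the main identity
  have hSS : S * (starRingEnd ℂ) S = (p:ℂ)^n * T := by
    have c1 : (starRingEnd ℂ) S = ∑ y : Fin n → ZMod p, ψ (-(Q y)) := by
      rw [hS, map_sum]
      exact Finset.sum_congr rfl fun y _ => hconj _
    calc S * (starRingEnd ℂ) S
        = ∑ x : Fin n → ZMod p, ∑ y : Fin n → ZMod p, ψ (Q x - Q y) := by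
          rw [c1, hS, Finset.sum_mul_sum]
          exact Finset.sum_congr rfl fun x _ => Finset.sum_congr rfl fun y _ => by
            rw [← AddChar.map_add_eq_mul, sub_eq_add_neg]
      _ = ∑ y : Fin n → ZMod p, ∑ x : Fin n → ZMod p, ψ (Q x - Q y) :=
          Finset.sum_comm
      _ = ∑ y : Fin n → ZMod p, ∑ h : Fin n → ZMod p, ψ (Q (h + y) - Q y) := by
          refine Finset.sum_congr rfl fun y _ => ?_
          exact (Equiv.sum_comp (Equiv.addRight y) fun x => ψ (Q x - Q y)).symm
      _ = ∑ h : Fin n → ZMod p, ∑ y : Fin n → ZMod p, ψ (Q (h + y) - Q y) :=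
          Finset.sum_comm
      _ = ∑ h : Fin n → ZMod p, ψ (Q h) * (if A h = 0 then (p:ℂ)^n else 0) := by
          refine Finset.sum_congr rfl fun h _ => ?_
          calc ∑ y : Fin n → ZMod p, ψ (Q (h + y) - Q y)
              = ∑ y : Fin n → ZMod p, ψ (Q h) * ψ (∑ j, A h j * y j) := by
                refine Finset.sum_congr rfl fun y _ => ?_
                rw [key h y, AddChar.map_add_eq_mul]
            _ = ψ (Q h) * ∑ y : Fin n → ZMod p, ψ (∑ j, A h j * y j) := by
                rw [Finset.mul_sum]
            _ = _ := by rw [sum_pi_char ψ hψprim (A h)]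
      _ = ∑ h : Fin n → ZMod p,
            (if M.mulVec h = 0 then ψ (Q h) * (p:ℂ)^n else 0) := by
          refine Finset.sum_congr rfl fun h _ => ?_
          simp only [hAiff h, mul_ite, mul_zero]
      _ = ∑ h ∈ K, ψ (Q h) * (p:ℂ)^n := by
          rw [hK, Finset.sum_filter]
      _ = (p:ℂ)^n * T := by
          rw [hT, Finset.mul_sum]
          refine Finset.sum_congr rfl fun h hh => ?_
          rw [hQK h (by simpa [hK, Finset.mem_filter] using hh), mul_comm]
  -- cardinality of the kernel
  have hrange : Module.finrank (ZMod p) (LinearMap.range M.mulVecLin) = r := hr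
  have hrn : Module.finrank (ZMod p) (LinearMap.range M.mulVecLin)
      + Module.finrank (ZMod p) (LinearMap.ker M.mulVecLin) = n := by
    rw [LinearMap.finrank_range_add_finrank_ker]
    simp [Module.finrank_pi]
  have hrle : r ≤ n := by omega
  have hker : Module.finrank (ZMod p) (LinearMap.ker M.mulVecLin) = n - r := by omega
  have hcard : K.card = p ^ (n - r) := by
    have h5 : K.card = Fintype.card {h : Fin n → ZMod p // M.mulVec h = 0} :=
      (Fintype.card_subtype _).symm
    have h6 : Fintype.card {h : Fin n → ZMod p // M.mulVec h = 0}
        = Fintype.card (LinearMap.ker M.mulVecLin) :=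
      Fintype.card_congr (Equiv.subtypeEquivRight fun h => by
        simp [LinearMap.mem_ker, Matrix.mulVecLin_apply])
    rw [h5, h6, Module.card_eq_pow_finrank (K := ZMod p), ZMod.card, hker]
  -- norms
  have hST : ‖S‖^2 = (p:ℝ)^n * ‖T‖ := by
    have := congrArg norm hSS
    rwa [norm_mul, RCLike.norm_conj, norm_mul, norm_pow, Complex.norm_natCast,
      ← pow_two] at this
  have hTle : ‖T‖ ≤ (p:ℝ)^(n-r) := by
    calc ‖T‖ ≤ ∑ h ∈ K, ‖ψ (∑ i, b i * h i)‖ := norm_sum_le _ _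
      _ = K.card := by simp [hnorm]
      _ = (p:ℝ)^(n-r) := by rw [hcard]; push_cast; ring
  -- final numerics
  have hpn0 : (0:ℝ) < (p:ℝ)^n := pow_pos hppos n
  have hgoal : (∑ x : Fin n → ZMod p,
      Complex.exp (2 * Real.pi * I / p) ^
        ((∑ i, ∑ j, x i * M i j * x j) + ∑ i, b i * x i).val) = S := rfl
  have hnd : ‖S / (p:ℂ)^n‖ = ‖S‖ / (p:ℝ)^n := by
    rw [norm_div, norm_pow, Complex.norm_natCast]
  set R : ℝ := (p:ℝ) ^ (-(r:ℝ)/2) with hR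
  have hRnn : 0 ≤ R := Real.rpow_nonneg hppos.le _
  have hRsq : R^2 = (p:ℝ)^(n-r) / (p:ℝ)^n := by
    have h1 : R^2 = (p:ℝ) ^ (-(r:ℝ)) := by
      rw [hR, ← Real.rpow_natCast ((p:ℝ) ^ (-(r:ℝ)/2)) 2, ← Real.rpow_mul hppos.le]
      norm_num
    have h2 : (p:ℝ) ^ (-(r:ℝ)) = ((p:ℝ)^(r:ℕ))⁻¹ := by
      rw [Real.rpow_neg hppos.le, Real.rpow_natCast]
    have h3 : (p:ℝ)^(n-r) / (p:ℝ)^n = ((p:ℝ)^(r:ℕ))⁻¹ := by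
      rw [pow_sub₀ _ hppos.ne' hrle]
      field_simp
    rw [h1, h2, h3]
  have hmain : (‖S‖ / (p:ℝ)^n)^2 = ‖T‖ / (p:ℝ)^n := by
    rw [div_pow, hST, pow_two, mul_div_mul_left _ _ hpn0.ne']
  constructor
  · rw [hgoal, hnd]
    have h1 : (‖S‖ / (p:ℝ)^n)^2 ≤ R^2 := by
      rw [hmain, hRsq]
      gcongr
    calc ‖S‖ / (p:ℝ)^n = Real.sqrt ((‖S‖ / (p:ℝ)^n)^2) :=
          (Real.sqrt_sq (by positivity)).symm
      _ ≤ Real.sqrt (R^2) := Real.sqrt_le_sqrt h1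
      _ = R := Real.sqrt_sq hRnn
  · intro hb
    rw [hgoal, hnd]
    have hTval : T = (K.card : ℂ) := by
      rw [hT]
      subst hb
      simp
    have h1 : (‖S‖ / (p:ℝ)^n)^2 = R^2 := by
      rw [hmain, hRsq, hTval]
      rw [Complex.norm_natCast, hcard]
      push_cast; ring
    calc ‖S‖ / (p:ℝ)^n = Real.sqrt ((‖S‖ / (p:ℝ)^n)^2) :=
          (Real.sqrt_sq (by positivity)).symm
      _ = Real.sqrt (R^2) := by rw [h1]
      _ = R := Real.sqrt_sq hRnn
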